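/- Let F be a continuous strictly increasing CDF on ℝ with density f and finite mean. Then the function α ↦ E[Y | Y > F^{-1}(α)] is continuous on (0,1) and differentiable wherever f(F^{-1}(α)) > 0, with derivative d/dα E[Y | Y > F^{-1}(α)] = (E[Y | Y > F^{-1}(α)] − F^{-1}(α)) / (1 − α). -/

import Mathlib

open MeasureTheory Set Filter

noncomputable def cdfOf (f : ℝ → ℝ) (x : ℝ) : ℝ := ∫ y in Iic x, f y
noncomputable def quant (F : ℝ → ℝ) (α : ℝ) : ℝ := sInf {x | α ≤ F x}
noncomputable def trimMean (f : ℝ → ℝ) (α : ℝ) : ℝ :=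
  (1 - α)⁻¹ * ∫ y in Ioi (quant (cdfOf f) α), y * f y

theorem stmt17 (f F Finv : ℝ → ℝ) (hF : F = cdfOf f)
    (hf0 : ∀ y, 0 ≤ f y) (hf1 : ∫ y, f y = 1)
    (hmean : Integrable (fun y => y * f y))
    (hFc : Continuous F) (hFm : StrictMono F)
    (hFinv : ∀ α ∈ Ioo (0:ℝ) 1, F (Finv α) = α)
    (T : ℝ → ℝ) (hT : T = fun α => (1 - α)⁻¹ * ∫ y in Ioi (Finv α), y * f y) :
    ContinuousOn T (Ioo 0 1) ∧
    ∀ α ∈ Ioo (0:ℝ) 1, 0 < f (Finv α) →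
      HasDerivAt T ((T α - Finv α) / (1 - α)) α := by
  have hfi : Integrable f := by
    by_contra h
    rw [integral_undef h] at hf1; norm_num at hf1
  have hFval : ∀ x, F x = ∫ y in Iic x, f y := fun x => by rw [hF]; rfl
  -- integral of f over Ioc equals F b - F a
  have hIoc : ∀ a b : ℝ, a ≤ b → ∫ y in Ioc a b, f y = F b - F a := by
    intro a b hab
    have h1 : ∫ y in Iic a ∪ Ioc a b, f y
        = (∫ y in Iic a, f y) + ∫ y in Ioc a b, f y :=
      setIntegral_union (Iic_disjoint_Ioc le_rfl) measurableSet_Ioc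
        hfi.integrableOn hfi.integrableOn
    rw [Iic_union_Ioc_eq_Iic hab] at h1
    rw [hFval a, hFval b]; linarith
  set K : ℝ → ℝ := fun a => ∫ y in Ioi (Finv a), y * f y with hKdef
  -- Finv is strictly monotone on (0,1)
  have hFinvlt : ∀ α ∈ Ioo (0:ℝ) 1, ∀ β ∈ Ioo (0:ℝ) 1, α < β → Finv α < Finv β := by
    intro α hα β hβ h
    have : F (Finv α) < F (Finv β) := by rw [hFinv α hα, hFinv β hβ]; exact h
    exact hFm.lt_iff_lt.mp this
  -- key two-sided bound on increments of K
  have key : ∀ α ∈ Ioo (0:ℝ) 1, ∀ β ∈ Ioo (0:ℝ) 1, α < β →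
      (β - α) * (- Finv β) ≤ K β - K α ∧ K β - K α ≤ (β - α) * (- Finv α) := by
    intro α hα β hβ hab
    have hab' : Finv α ≤ Finv β := (hFinvlt α hα β hβ hab).le
    have hsplit : K α = (∫ y in Ioc (Finv α) (Finv β), y * f y) + K β := by
      rw [hKdef]
      simp only
      rw [← Ioc_union_Ioi_eq_Ioi hab',
        setIntegral_union (Ioc_disjoint_Ioi le_rfl) measurableSet_Ioi
          hmean.integrableOn hmean.integrableOn]
    have hmeas : ∫ y in Ioc (Finv α) (Finv β), f y = β - α := by
      rw [hIoc _ _ hab', hFinv α hα, hFinv β hβ]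
    have hlow : (Finv α) * (β - α) ≤ ∫ y in Ioc (Finv α) (Finv β), y * f y := by
      calc Finv α * (β - α) = ∫ y in Ioc (Finv α) (Finv β), Finv α * f y := by
            rw [integral_const_mul, hmeas]
        _ ≤ _ := setIntegral_mono_on ((hfi.integrableOn).const_mul _)
            hmean.integrableOn measurableSet_Ioc
            (fun y hy => mul_le_mul_of_nonneg_right hy.1.le (hf0 y))
    have hhigh : (∫ y in Ioc (Finv α) (Finv β), y * f y) ≤ Finv β * (β - α) := by
      calc (∫ y in Ioc (Finv α) (Finv β), y * f y)
          ≤ ∫ y in Ioc (Finv α) (Finv β), Finv β * f y :=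
            setIntegral_mono_on hmean.integrableOn ((hfi.integrableOn).const_mul _)
              measurableSet_Ioc
              (fun y hy => mul_le_mul_of_nonneg_right hy.2 (hf0 y))
        _ = Finv β * (β - α) := by rw [integral_const_mul, hmeas]
    constructor <;> nlinarith [hsplit, hlow, hhigh]
  -- continuity of Finv at points of (0,1)
  have hFinvCont : ∀ α ∈ Ioo (0:ℝ) 1, Tendsto Finv (nhds α) (nhds (Finv α)) := by
    intro α hα
    rw [Metric.tendsto_nhds]
    intro ε hε
    have h1 : F (Finv α - ε) < α := by
      calc F (Finv α - ε) < F (Finv α) := hFm (by linarith)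
        _ = α := hFinv α hα
    have h2 : α < F (Finv α + ε) := by
      calc α = F (Finv α) := (hFinv α hα).symm
        _ < F (Finv α + ε) := hFm (by linarith)
    have hnhd : Ioo (max 0 (F (Finv α - ε))) (min 1 (F (Finv α + ε))) ∈ nhds α :=
      isOpen_Ioo.mem_nhds
        ⟨max_lt hα.1 h1, lt_min hα.2 h2⟩
    filter_upwards [hnhd] with β hβ
    have hβ01 : β ∈ Ioo (0:ℝ) 1 :=
      ⟨lt_of_le_of_lt (le_max_left _ _) hβ.1, lt_of_lt_of_le hβ.2 (min_le_left _ _)⟩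
    have hl : Finv α - ε < Finv β := by
      have : F (Finv α - ε) < F (Finv β) := by
        rw [hFinv β hβ01]; exact lt_of_le_of_lt (le_max_right _ _) hβ.1
      exact hFm.lt_iff_lt.mp this
    have hr : Finv β < Finv α + ε := by
      have : F (Finv β) < F (Finv α + ε) := by
        rw [hFinv β hβ01]; exact lt_of_lt_of_le hβ.2 (min_le_right _ _)
      exact hFm.lt_iff_lt.mp this
    rw [Real.dist_eq, abs_lt]
    constructor <;> linarith
  -- derivative of K
  have hKderiv : ∀ α ∈ Ioo (0:ℝ) 1, HasDerivAt K (-Finv α) α := by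
    intro α hα
    rw [hasDerivAt_iff_tendsto_slope]
    have hmem : Ioo (0:ℝ) 1 ∈ nhdsWithin α {α}ᶜ :=
      nhdsWithin_le_nhds (isOpen_Ioo.mem_nhds hα)
    have hbound : ∀ᶠ β in nhdsWithin α {α}ᶜ,
        ‖slope K α β - (-Finv α)‖ ≤ |Finv β - Finv α| := by
      filter_upwards [hmem, self_mem_nhdsWithin] with β hβ hβne
      have hne : β ≠ α := hβne
      rcases hne.lt_or_gt with h | h
      · obtain ⟨h1, h2⟩ := key β hβ α hα h
        have hd : 0 < α - β := by linarith
        have hs : slope K α β = (K α - K β) / (α - β) := by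
          rw [slope_comm, slope_def_field]
        have hlo : -Finv α ≤ slope K α β := by
          rw [hs, le_div_iff₀ hd]; nlinarith
        have hhi : slope K α β ≤ -Finv β := by
          rw [hs, div_le_iff₀ hd]; nlinarith
        have hm : Finv β < Finv α := hFinvlt β hβ α hα h
        rw [Real.norm_eq_abs, abs_le]
        constructor
        · have := abs_nonneg (Finv β - Finv α); linarith
        · have := le_abs_self (Finv α - Finv β)
          rw [abs_sub_comm]; linarith
      · obtain ⟨h1, h2⟩ := key α hα β hβ h
        have hd : 0 < β - α := by linarith
        have hs : slope K α β = (K β - K α) / (β - α) := slope_def_field K α β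
        have hlo : -Finv β ≤ slope K α β := by
          rw [hs, le_div_iff₀ hd]; nlinarith
        have hhi : slope K α β ≤ -Finv α := by
          rw [hs, div_le_iff₀ hd]; nlinarith
        have hm : Finv α < Finv β := hFinvlt α hα β hβ h
        rw [Real.norm_eq_abs, abs_le]
        constructor
        · have := le_abs_self (Finv β - Finv α); linarith
        · have := abs_nonneg (Finv β - Finv α); linarith
    have htend : Tendsto (fun β => |Finv β - Finv α|) (nhdsWithin α {α}ᶜ) (nhds 0) := by
      have h0 : Tendsto (fun β => Finv β - Finv α) (nhds α) (nhds 0) := by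
        simpa using (hFinvCont α hα).sub_const (Finv α)
      have := h0.abs
      rw [abs_zero] at this
      exact this.mono_left nhdsWithin_le_nhds
    have hz : Tendsto (fun β => slope K α β - (-Finv α)) (nhdsWithin α {α}ᶜ) (nhds 0) :=
      squeeze_zero_norm' hbound htend
    exact tendsto_sub_nhds_zero_iff.mp hz
  -- derivative of T
  have hTderiv : ∀ α ∈ Ioo (0:ℝ) 1, HasDerivAt T ((T α - Finv α) / (1 - α)) α := by
    intro α hα
    have hne : (1:ℝ) - α ≠ 0 := by have := hα.2; intro h; linarith
    have h1 : HasDerivAt (fun x : ℝ => 1 - x) (-1) α := by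
      exact (hasDerivAt_id' α).const_sub 1
    have h2 : HasDerivAt (fun x : ℝ => (1 - x)⁻¹) (((1-α)^2)⁻¹) α := by
      have := h1.inv hne
      refine this.congr_deriv ?_
      rw [neg_neg, one_div]
    have h3 := h2.mul (hKderiv α hα)
    have hTK : T = fun a => (1 - a)⁻¹ * K a := hT
    rw [hTK]
    refine h3.congr_deriv ?_
    simp only
    field_simp
    ring
  refine ⟨fun α hα => ((hTderiv α hα).continuousAt).continuousWithinAt,
    fun α hα _ => hTderiv α hα⟩
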